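/- arXiv:1003.3923 — 2 statements merged into one kernel-verified Lean document; each statement's English description precedes it below -/
import Mathlib

section
/- Define Φ : ℝ⁴ → ℝ⁴ by Φ(t,φ,θ,r) = (eᵗ·sin(2πr), φ, eᵗ·cos(2πr), θ), and let i : ℝ⁴ → ℝ⁴ be the linear map i(u₁,w₁,u₂,w₂) = (−w₁, u₁, −w₂, u₂) (multiplication by i on ℂ² under z_j = p_j + i q_j). Then for every (φ,θ,r) ∈ ℝ³, writing D := DΦ(0,φ,θ,r) for the Fréchet derivative at the point (0,φ,θ,r), one has: (a) i(D·(1,0,0,0)) = D·(0, sin(2πr), cos(2πr), 0), and (b) i(D·(0,0,0,1)) = D·(0, 2π·cos(2πr), −2π·sin(2πr), 0). -/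
/-!
STATEMENT 2: Under the symplectization embedding
`Φ(t,φ,θ,r) = (eᵗ sin(2πr), φ, eᵗ cos(2πr), θ)` of `ℝ × T³` into `T*T²`, the
pulled-back complex structure `Φ*i` maps `∂_t` to the Reeb vector field
`sin(2πr) ∂_φ + cos(2πr) ∂_θ` of `α_can` along `{0} × T³`, and maps `∂_r` into
`ker α_can` (onto `2π(cos(2πr) ∂_φ − sin(2πr) ∂_θ)`).
-/

open Real

noncomputable section

/-- The map `Φ : ℝ⁴ → ℝ⁴`, `(t,φ,θ,r) ↦ (eᵗ sin(2πr), φ, eᵗ cos(2πr), θ)`,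
where the target coordinates are `(p₁,q₁,p₂,q₂)`. -/
def phiMap : ℝ × ℝ × ℝ × ℝ → ℝ × ℝ × ℝ × ℝ :=
  fun x => (Real.exp x.1 * Real.sin (2 * π * x.2.2.2), x.2.1,
            Real.exp x.1 * Real.cos (2 * π * x.2.2.2), x.2.2.1)

/-- Multiplication by `i` on `ℂ² ≅ ℝ⁴` in the coordinates `(p₁,q₁,p₂,q₂)`,
where `z_j = p_j + i q_j`:  `(u₁,w₁,u₂,w₂) ↦ (−w₁,u₁,−w₂,u₂)`. -/
def mulI : ℝ × ℝ × ℝ × ℝ → ℝ × ℝ × ℝ × ℝ :=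
  fun v => (-v.2.1, v.1, -v.2.2.2, v.2.2.1)

theorem pullback_i_compatible (φ θ r : ℝ) :
    mulI (fderiv ℝ phiMap (0, φ, θ, r) (1, 0, 0, 0))
      = fderiv ℝ phiMap (0, φ, θ, r) (0, Real.sin (2 * π * r), Real.cos (2 * π * r), 0) ∧
    mulI (fderiv ℝ phiMap (0, φ, θ, r) (0, 0, 0, 1))
      = fderiv ℝ phiMap (0, φ, θ, r)
          (0, 2 * π * Real.cos (2 * π * r), -(2 * π) * Real.sin (2 * π * r), 0) := by
  have p : ℝ × ℝ × ℝ × ℝ := (0, φ, θ, r)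
  let P1 : (ℝ × ℝ × ℝ × ℝ) →L[ℝ] ℝ := ContinuousLinearMap.fst ℝ ℝ (ℝ × ℝ × ℝ)
  let P2 : (ℝ × ℝ × ℝ × ℝ) →L[ℝ] ℝ :=
    (ContinuousLinearMap.fst ℝ ℝ (ℝ × ℝ)).comp (ContinuousLinearMap.snd ℝ ℝ (ℝ × ℝ × ℝ))
  let P3 : (ℝ × ℝ × ℝ × ℝ) →L[ℝ] ℝ :=
    ((ContinuousLinearMap.fst ℝ ℝ ℝ).comp (ContinuousLinearMap.snd ℝ ℝ (ℝ × ℝ))).comp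
      (ContinuousLinearMap.snd ℝ ℝ (ℝ × ℝ × ℝ))
  let P4 : (ℝ × ℝ × ℝ × ℝ) →L[ℝ] ℝ :=
    ((ContinuousLinearMap.snd ℝ ℝ ℝ).comp (ContinuousLinearMap.snd ℝ ℝ (ℝ × ℝ))).comp
      (ContinuousLinearMap.snd ℝ ℝ (ℝ × ℝ × ℝ))
  have hP4 : HasFDerivAt (fun x : ℝ × ℝ × ℝ × ℝ => x.2.2.2) P4 (0, φ, θ, r) :=
    P4.hasFDerivAt
  have h4 : HasFDerivAt (fun x : ℝ × ℝ × ℝ × ℝ => 2 * π * x.2.2.2)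
      ((2 * π) • P4) (0, φ, θ, r) := hP4.const_smul (2 * π)
  have hsin : HasFDerivAt (fun x : ℝ × ℝ × ℝ × ℝ => Real.sin (2 * π * x.2.2.2))
      (Real.cos (2 * π * r) • ((2 * π) • P4)) (0, φ, θ, r) :=
    (Real.hasDerivAt_sin (2 * π * r)).comp_hasFDerivAt (h₂ := Real.sin) ((0:ℝ),φ,θ,r) h4
  have hcos : HasFDerivAt (fun x : ℝ × ℝ × ℝ × ℝ => Real.cos (2 * π * x.2.2.2))
      ((-Real.sin (2 * π * r)) • ((2 * π) • P4)) (0, φ, θ, r) :=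
    (Real.hasDerivAt_cos (2 * π * r)).comp_hasFDerivAt (h₂ := Real.cos) ((0:ℝ),φ,θ,r) h4
  have hp1 : HasFDerivAt (fun x : ℝ × ℝ × ℝ × ℝ => x.1) P1 (0, φ, θ, r) := P1.hasFDerivAt
  have hexp : HasFDerivAt (fun x : ℝ × ℝ × ℝ × ℝ => Real.exp x.1)
      (Real.exp 0 • P1) (0, φ, θ, r) :=
    (Real.hasDerivAt_exp (0 : ℝ)).comp_hasFDerivAt (h₂ := Real.exp) ((0:ℝ),φ,θ,r) hp1
  have hp2 : HasFDerivAt (fun x : ℝ × ℝ × ℝ × ℝ => x.2.1) P2 (0, φ, θ, r) := P2.hasFDerivAt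
  have hp3 : HasFDerivAt (fun x : ℝ × ℝ × ℝ × ℝ => x.2.2.1) P3 (0, φ, θ, r) := P3.hasFDerivAt
  have h1 := hexp.fun_mul hsin
  have h3 := hexp.fun_mul hcos
  have hΦ : HasFDerivAt phiMap
      ((Real.exp 0 • (Real.cos (2 * π * r) • ((2 * π) • P4))
          + Real.sin (2 * π * r) • (Real.exp 0 • P1)).prod
        (P2.prod ((Real.exp 0 • ((-Real.sin (2 * π * r)) • ((2 * π) • P4))
          + Real.cos (2 * π * r) • (Real.exp 0 • P1)).prod P3))) (0, φ, θ, r) :=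
    h1.prodMk (hp2.prodMk (h3.prodMk hp3))
  rw [hΦ.fderiv]
  refine ⟨?_, ?_⟩ <;>
  · simp [mulI, P1, P2, P3, P4, Prod.ext_iff]
    try ring_nf
    try simp
end
end

section
/- Let Σ be a compact connected topological surface with nonempty boundary ∂Σ, and let φ : Σ → Σ be a homeomorphism equal to the identity on a neighborhood of ∂Σ. Let Σ_φ := (ℝ × Σ)/∼ be the mapping torus, where (t+1, z) ∼ (t, φ(z)), with the quotient topology. Let ι : Σ → Σ_φ be the fiber inclusion z ↦ [(0,z)], fix a connected component C of ∂Σ, and let L := { [(t,z)] : t ∈ ℝ, z ∈ C } ⊆ Σ_φ (a torus, since φ fixes C pointwise) with inclusion j : L → Σ_φ. Then the first singular homology group H₁(Σ_φ; ℤ) is generated by the union of the images ι_*(H₁(Σ; ℤ)) and j_*(H₁(L; ℤ)); equivalently, every class h ∈ H₁(Σ_φ; ℤ) can be written as h = ι_*(h_Σ) + j_*(h_L) with h_Σ ∈ H₁(Σ; ℤ) and h_L ∈ H₁(L; ℤ). -/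
/-!
STATEMENT 7 (First homology of a mapping torus of a surface): let `Σ` be a
compact connected topological surface with nonempty boundary (a charted space
over the Euclidean half-plane), `φ : Σ → Σ` a homeomorphism equal to the
identity near `∂Σ`, `Σ_φ` the mapping torus, `C` a connected component of
`∂Σ`, and `L ⊂ Σ_φ` the torus traced out by `C`.  Then every first homology
class of `Σ_φ` is the sum of a class coming from the fiber `Σ` and a class
coming from `L`.  Since all spaces involved are path-connected, `H₁` is
expressed as the abelianization of the fundamental group.
-/

open CategoryTheory

noncomputable section

/-- The mapping torus `(ℝ × S)/((t+1,z) ∼ (t,φ z))` of `φ : S → S`. -/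
abbrev MappingTorus (S : Type) [TopologicalSpace S] (φ : S → S) : Type :=
  Quot (fun a b : ℝ × S => a.1 = b.1 + 1 ∧ b.2 = φ a.2)

/-- The point `[(t,z)]` of the mapping torus. -/
def MappingTorus.mk (S : Type) [TopologicalSpace S] (φ : S → S) (t : ℝ) (z : S) :
    MappingTorus S φ := Quot.mk _ (t, z)

/-- The fiber inclusion `ι : S → S_φ`, `z ↦ [(0,z)]`. -/
def fiberIncl (S : Type) [TopologicalSpace S] (φ : S → S) : C(S, MappingTorus S φ) :=
  ⟨fun z => MappingTorus.mk S φ 0 z,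
    continuous_quot_mk.comp (continuous_const.prodMk continuous_id)⟩

/-- The subset `L = {[(t,z)] : t ∈ ℝ, z ∈ C}` of the mapping torus traced out
by a subset `C ⊆ S`. -/
def torusSet (S : Type) [TopologicalSpace S] (φ : S → S) (C : Set S) :
    Set (MappingTorus S φ) :=
  {q | ∃ (t : ℝ) (z : S), z ∈ C ∧ q = MappingTorus.mk S φ t z}

/-- The inclusion `j : L → S_φ`. -/
def torusIncl (S : Type) [TopologicalSpace S] (φ : S → S) (C : Set S) :
    C(torusSet S φ C, MappingTorus S φ) :=
  ⟨Subtype.val, continuous_subtype_val⟩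

open scoped FundamentalGroupoid in
/-- The homomorphism induced by a continuous map on fundamental groups. -/
def inducedπ₁ {X Y : Type} [TopologicalSpace X] [TopologicalSpace Y]
    (f : C(X, Y)) (x : X) :
    FundamentalGroup X x →* FundamentalGroup Y (f x) :=
  CategoryTheory.Functor.mapEnd (FundamentalGroupoid.mk x)
    (show FundamentalGroupoid X ⥤ FundamentalGroupoid Y from
      πₘ (show TopCat.of X ⟶ TopCat.of Y from TopCat.ofHom f))

namespace MTAux

variable {S : Type} [TopologicalSpace S] (φ : S ≃ₜ S)

/-- Integer powers of `φ` as a permutation of `S`. -/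
def P (n : ℤ) : Equiv.Perm S := φ.toEquiv ^ n

lemma P_add_one (n : ℤ) (z : S) : P φ (n + 1) z = P φ n (φ z) := by
  show (φ.toEquiv ^ (n + 1)) z = (φ.toEquiv ^ n) (φ z)
  rw [zpow_add_one]; rfl

lemma P_sub_one (n : ℤ) (z : S) : P φ (n - 1) z = P φ n (φ.symm z) := by
  show (φ.toEquiv ^ (n - 1)) z = (φ.toEquiv ^ n) (φ.symm z)
  rw [zpow_sub_one]; rfl

lemma P_P (m n : ℤ) (z : S) : P φ m (P φ n z) = P φ (m + n) z := by
  show (φ.toEquiv ^ m) ((φ.toEquiv ^ n) z) = (φ.toEquiv ^ (m + n)) z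
  rw [zpow_add]; rfl

lemma P_zero (z : S) : P φ 0 z = z := rfl

lemma contPow (ψ : S ≃ₜ S) : ∀ k : ℕ, Continuous ⇑(ψ.toEquiv ^ k) := by
  intro k
  induction k with
  | zero => simpa using continuous_id
  | succ m ih =>
      have : ⇑(ψ.toEquiv ^ (m + 1)) = fun z => (ψ.toEquiv ^ m) (ψ z) := by
        funext z; rw [pow_succ]; rfl
      rw [this]
      exact ih.comp ψ.continuous

lemma contP : ∀ n : ℤ, Continuous ⇑(P φ n) := by
  intro n
  cases n with
  | ofNat k =>
      show Continuous ⇑(φ.toEquiv ^ (Int.ofNat k))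
      rw [Int.ofNat_eq_coe, zpow_natCast]; exact contPow φ k
  | negSucc k =>
      show Continuous ⇑(φ.toEquiv ^ (Int.negSucc k))
      rw [zpow_negSucc, ← inv_pow]
      exact contPow φ.symm (k + 1)

/-- `P n` as a homeomorphism. -/
def Ph (n : ℤ) : S ≃ₜ S where
  toEquiv := P φ n
  continuous_toFun := contP φ n
  continuous_invFun := by
    have : (P φ n).invFun = ⇑(P φ (-n)) := by
      show ⇑(φ.toEquiv ^ n).symm = ⇑(φ.toEquiv ^ (-n))
      rw [zpow_neg, ← Equiv.Perm.inv_def]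
    rw [this]; exact contP φ (-n)

lemma Ph_apply (n : ℤ) (z : S) : Ph φ n z = P φ n z := rfl

end MTAux

namespace MTAux

variable {S : Type} [TopologicalSpace S] (φ : S ≃ₜ S)



lemma q_step (t : ℝ) (z : S) : MappingTorus.mk S ⇑φ (t + 1) z = MappingTorus.mk S ⇑φ t (φ z) :=
  Quot.sound ⟨rfl, rfl⟩

lemma q_zpow (n : ℤ) (t : ℝ) (z : S) : MappingTorus.mk S ⇑φ (t + n) z = MappingTorus.mk S ⇑φ t (P φ n z) := by
  induction n using Int.induction_on generalizing z with
  | zero => simp [P_zero]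
  | succ k ih =>
      have h1 : t + ((k : ℤ) + 1 : ℤ) = (t + (k : ℤ)) + 1 := by push_cast; ring
      rw [h1, q_step, ih (φ z), ← P_add_one]
  | pred k ih =>
      have h1 : ((t + (-(k:ℤ) - 1 : ℤ) : ℝ)) + 1 = t + (-(k:ℤ) : ℤ) := by push_cast; ring
      have h2 := q_step φ (t + (-(k:ℤ) - 1 : ℤ)) (φ.symm z)
      rw [h1, Homeomorph.apply_symm_apply] at h2
      rw [← h2, ih (φ.symm z), ← P_sub_one]

/-- The (discontinuous) invariant used to distinguish points of the mapping torus. -/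
def Ginv : MappingTorus S ⇑φ → ℝ × S :=
  Quot.lift (fun p => (Int.fract p.1, P φ ⌊p.1⌋ p.2)) (by
    rintro ⟨a1, a2⟩ ⟨b1, b2⟩ ⟨h1, h2⟩
    dsimp at h1 h2 ⊢
    subst h1; subst h2
    rw [Int.fract_add_one, Int.floor_add_one]
    exact congrArg _ (P_add_one φ ⌊b1⌋ a2))

lemma Ginv_mk (t : ℝ) (z : S) : Ginv φ (MappingTorus.mk S ⇑φ t z) = (Int.fract t, P φ ⌊t⌋ z) := rfl

lemma mk_eq_iff {t t' : ℝ} {z z' : S} :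
    MappingTorus.mk S ⇑φ t z = MappingTorus.mk S ⇑φ t' z' ↔ ∃ n : ℤ, t = t' + n ∧ z = P φ (-n) z' := by
  constructor
  · intro h
    have hG := congrArg (Ginv φ) h
    rw [Ginv_mk, Ginv_mk, Prod.mk.injEq] at hG
    obtain ⟨hf, hP⟩ := hG
    refine ⟨⌊t⌋ - ⌊t'⌋, ?_, ?_⟩
    · have h1 := Int.floor_add_fract t
      have h2 := Int.floor_add_fract t'
      push_cast
      linarith [h1, h2, hf]
    · have : P φ (-⌊t⌋) (P φ ⌊t⌋ z) = P φ (-⌊t⌋) (P φ ⌊t'⌋ z') := congrArg _ hP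
      rw [P_P, P_P, neg_add_cancel, P_zero] at this
      rw [this]
      congr 1
      ring
  · rintro ⟨n, rfl, rfl⟩
    rw [q_zpow, P_P, add_neg_cancel, P_zero]

lemma exists_rep (x : MappingTorus S ⇑φ) : ∃ p : ℝ × S, MappingTorus.mk S ⇑φ p.1 p.2 = x := by
  obtain ⟨p, hp⟩ := Quot.exists_rep x
  exact ⟨p, hp⟩

lemma continuous_mk : Continuous (fun p : ℝ × S => MappingTorus.mk S ⇑φ p.1 p.2) :=
  continuous_quot_mk

lemma isOpenMap_mk : IsOpenMap (fun p : ℝ × S => MappingTorus.mk S ⇑φ p.1 p.2) := by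
  intro W hW
  have key : (fun p : ℝ × S => MappingTorus.mk S ⇑φ p.1 p.2) ⁻¹' ((fun p : ℝ × S => MappingTorus.mk S ⇑φ p.1 p.2) '' W)
      = ⋃ n : ℤ, (fun w : ℝ × S => (w.1 + (n : ℝ), P φ (-n) w.2)) '' W := by
    ext ⟨t, z⟩
    simp only [Set.mem_preimage, Set.mem_image, Set.mem_iUnion]
    constructor
    · rintro ⟨w, hw, hqe⟩
      obtain ⟨n, h1, h2⟩ := (mk_eq_iff φ).mp hqe.symm
      exact ⟨n, w, hw, by rw [Prod.mk.injEq]; exact ⟨h1.symm, h2.symm⟩⟩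
    · rintro ⟨n, w, hw, hwe⟩
      refine ⟨w, hw, ?_⟩
      have : MappingTorus.mk S ⇑φ t z = MappingTorus.mk S ⇑φ w.1 w.2 := by
        rw [mk_eq_iff φ]
        rw [Prod.mk.injEq] at hwe
        exact ⟨n, hwe.1.symm, hwe.2.symm⟩
      exact this.symm
  have hopen : IsOpen ((fun p : ℝ × S => MappingTorus.mk S ⇑φ p.1 p.2) ⁻¹' ((fun p : ℝ × S => MappingTorus.mk S ⇑φ p.1 p.2) '' W)) := by
    rw [key]
    refine isOpen_iUnion fun n => ?_
    have : (fun w : ℝ × S => (w.1 + (n : ℝ), P φ (-n) w.2))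
        = ⇑((Homeomorph.addRight (n : ℝ)).prodCongr (Ph φ (-n))) := rfl
    rw [this]
    exact ((Homeomorph.addRight (n : ℝ)).prodCongr (Ph φ (-n))).isOpenMap W hW
  exact hopen

end MTAux

namespace MTAux
open Topology

variable {S : Type} [TopologicalSpace S] (φ : S ≃ₜ S)

/-- An open "stripe" of width 1 in `ℝ × S`. -/
def stripe (c : ℝ) : Set (ℝ × S) := Set.Ioo (c - 2⁻¹) (c + 2⁻¹) ×ˢ (Set.univ : Set S)

lemma isOpen_stripe (c : ℝ) : IsOpen (stripe (S := S) c) :=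
  isOpen_Ioo.prod isOpen_univ

lemma injOn_stripe (c : ℝ) :
    Set.InjOn (fun p : ℝ × S => MappingTorus.mk S ⇑φ p.1 p.2) (stripe c) := by
  rintro ⟨t, z⟩ ⟨ht, -⟩ ⟨t', z'⟩ ⟨ht', -⟩ h
  obtain ⟨n, h1, h2⟩ := (mk_eq_iff φ).mp h
  have hn : n = 0 := by
    have habs : |(n : ℝ)| < 1 := by
      rw [abs_lt]
      simp only [Set.mem_Ioo] at ht ht'
      constructor <;> nlinarith [ht.1, ht.2, ht'.1, ht'.2]
    have h3 : |n| < 1 := by exact_mod_cast habs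
    have := abs_lt.mp h3
    omega
  subst hn
  have h1' : t = t' := by simpa using h1
  have h2' : z = z' := by simpa [P_zero] using h2
  simp [h1', h2']

lemma image_stripe (c : ℝ) (n : ℤ) :
    (fun p : ℝ × S => MappingTorus.mk S ⇑φ p.1 p.2) '' stripe (c + n)
      = (fun p : ℝ × S => MappingTorus.mk S ⇑φ p.1 p.2) '' stripe c := by
  ext x
  simp only [Set.mem_image]
  constructor
  · rintro ⟨⟨t, z⟩, ⟨ht, -⟩, rfl⟩
    refine ⟨(t - n, P φ n z), ⟨?_, trivial⟩, ?_⟩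
    · simp only [Set.mem_Ioo] at ht ⊢
      constructor <;> linarith [ht.1, ht.2]
    · show MappingTorus.mk S ⇑φ (t - n) (P φ n z) = MappingTorus.mk S ⇑φ t z
      rw [mk_eq_iff φ]
      exact ⟨-n, by push_cast; ring, by rw [neg_neg]⟩
  · rintro ⟨⟨t, z⟩, ⟨ht, -⟩, rfl⟩
    refine ⟨(t + n, P φ (-n) z), ⟨?_, trivial⟩, ?_⟩
    · simp only [Set.mem_Ioo] at ht ⊢
      constructor <;> linarith [ht.1, ht.2]
    · show MappingTorus.mk S ⇑φ (t + n) (P φ (-n) z) = MappingTorus.mk S ⇑φ t z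
      rw [mk_eq_iff φ]
      exact ⟨n, rfl, rfl⟩

lemma isOpenEmbedding_restrict (c : ℝ) :
    IsOpenEmbedding ((stripe c).restrict (fun p : ℝ × S => MappingTorus.mk S ⇑φ p.1 p.2)) := by
  apply IsOpenEmbedding.of_continuous_injective_isOpenMap
  · exact (continuous_mk φ).comp continuous_subtype_val
  · exact Set.injOn_iff_injective.mp (injOn_stripe φ c)
  · intro O hO
    obtain ⟨O', hO', rfl⟩ := isOpen_induced_iff.mp hO
    have : (stripe c).restrict (fun p : ℝ × S => MappingTorus.mk S ⇑φ p.1 p.2) ''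
        (Subtype.val ⁻¹' O')
        = (fun p : ℝ × S => MappingTorus.mk S ⇑φ p.1 p.2) '' (O' ∩ stripe c) := by
      ext x
      simp only [Set.mem_image, Set.mem_preimage, Set.mem_inter_iff]
      constructor
      · rintro ⟨⟨p, hp⟩, hpO, rfl⟩
        exact ⟨p, ⟨hpO, hp⟩, rfl⟩
      · rintro ⟨p, ⟨hpO, hp⟩, rfl⟩
        exact ⟨⟨p, hp⟩, hpO, rfl⟩
    rw [this]
    exact isOpenMap_mk φ _ (hO'.inter (isOpen_stripe c))

end MTAux

namespace MTAux
open Topology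

variable {S : Type} [TopologicalSpace S] (φ : S ≃ₜ S)

theorem lift_exists (γ : ℝ → MappingTorus S ⇑φ) (hγ : Continuous γ) (p₀ : ℝ × S)
    (hp₀ : MappingTorus.mk S ⇑φ p₀.1 p₀.2 = γ 0) :
    ∃ g : ℝ → ℝ × S, Continuous g ∧ g 0 = p₀ ∧
      ∀ s ∈ Set.Icc (0:ℝ) 1, MappingTorus.mk S ⇑φ (g s).1 (g s).2 = γ s := by
  classical
  set q : ℝ × S → MappingTorus S ⇑φ := fun p => MappingTorus.mk S ⇑φ p.1 p.2 with hq
  set A : Set ℝ := {b | 0 ≤ b ∧ b ≤ 1 ∧ ∃ g : ℝ → ℝ × S, Continuous g ∧ g 0 = p₀ ∧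
      ∀ s ∈ Set.Icc (0:ℝ) b, q (g s) = γ s} with hA
  have hA0 : (0:ℝ) ∈ A := by
    refine ⟨le_refl 0, zero_le_one, fun _ => p₀, continuous_const, rfl, ?_⟩
    intro s hs
    have : s = 0 := le_antisymm hs.2 hs.1
    rw [this]; exact hp₀
  have hAne : A.Nonempty := ⟨0, hA0⟩
  have hbdd : BddAbove A := ⟨1, fun x hx => hx.2.1⟩
  set b := sSup A with hbdef
  have hb0 : 0 ≤ b := le_csSup hbdd hA0
  have hb1 : b ≤ 1 := csSup_le hAne (fun x hx => hx.2.1)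
  -- local evenly covered neighborhood of γ b
  obtain ⟨pb, hpb⟩ := exists_rep φ (γ b)
  set c := pb.1 with hc
  set W := q '' stripe c with hW
  have hWopen : IsOpen W := isOpenMap_mk φ _ (isOpen_stripe c)
  have hγbW : γ b ∈ W := by
    refine ⟨pb, ⟨?_, trivial⟩, hpb⟩
    rw [Set.mem_Ioo]
    constructor <;> rw [hc] <;> norm_num
  obtain ⟨ε, hε, hball⟩ := Metric.isOpen_iff.mp (hγ.isOpen_preimage W hWopen) b hγbW
  obtain ⟨a, haA, hab⟩ := exists_lt_of_lt_csSup hAne (by linarith : b - ε < b)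
  have ha_le : a ≤ b := le_csSup hbdd haA
  obtain ⟨ha0, ha1, g, hgc, hg0, hglift⟩ := haA
  have haball : a ∈ Metric.ball b ε := by
    rw [Metric.mem_ball, Real.dist_eq, abs_lt]
    constructor <;> linarith
  have hγaW : γ a ∈ W := hball haball
  have hga : q (g a) = γ a := hglift a ⟨ha0, le_refl a⟩
  -- find the sheet containing g a
  obtain ⟨w, hwst, hqw⟩ := hγaW
  have : q (g a) = q w := by rw [hga, ← hqw]
  obtain ⟨k, hk1, hk2⟩ := (mk_eq_iff φ).mp this
  have hgaV : g a ∈ stripe (c + k) := by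
    refine ⟨?_, trivial⟩
    obtain ⟨hw1, -⟩ := hwst
    simp only [Set.mem_Ioo] at hw1 ⊢
    constructor <;> [linarith [hw1.1]; linarith [hw1.2]]
  set f := (stripe (S := S) (c + k)).restrict q with hf
  have hfemb : IsOpenEmbedding f := isOpenEmbedding_restrict φ (c + k)
  have hfinj : Function.Injective f := Set.injOn_iff_injective.mp (injOn_stripe φ (c + k))
  set K := hfemb.isEmbedding.toHomeomorph with hK
  have hrange : Set.range f = W := by
    rw [hf]
    exact (Set.range_domRestrict q _).trans (image_stripe φ c k)
  set b' := min 1 (b + ε / 2) with hb'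
  have hab' : a ≤ b' := le_min ha1 (by linarith)
  set cl : ℝ → ℝ := fun s => min (max s a) b' with hcl
  have hclcont : Continuous cl := (continuous_id.max continuous_const).min continuous_const
  have hclmem : ∀ s, γ (cl s) ∈ Set.range f := by
    intro s
    rw [hrange]
    apply hball
    rw [Metric.mem_ball, Real.dist_eq, abs_lt]
    have h1 : a ≤ cl s := le_min (le_max_right s a) hab'
    have h2 : cl s ≤ b' := min_le_right _ _
    have h3 : b' ≤ b + ε / 2 := min_le_right _ _
    constructor <;> linarith
  set m : ℝ → ℝ × S := fun s => (K.symm ⟨γ (cl s), hclmem s⟩ : {p : ℝ × S // p ∈ stripe (c + k)}).val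
    with hm
  have hmcont : Continuous m :=
    continuous_subtype_val.comp (K.symm.continuous.comp ((hγ.comp hclcont).subtype_mk _))
  have hKval : ∀ v : {p : ℝ × S // p ∈ stripe (c + k)}, (K v).val = f v := fun v => rfl
  have hmlift : ∀ s, q (m s) = γ (cl s) := by
    intro s
    have : f (K.symm ⟨γ (cl s), hclmem s⟩) = (⟨γ (cl s), hclmem s⟩ : Set.range f).val := by
      exact Equiv.apply_ofInjective_symm hfinj _
    exact this
  have hcla : cl a = a := by
    rw [hcl]; simp [hab']
  have hma : m a = g a := by
    have hKga : K ⟨g a, hgaV⟩ = ⟨γ (cl a), hclmem a⟩ := by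
      apply Subtype.ext
      rw [hKval]
      show q (g a) = γ (cl a)
      rw [hcla, hga]
    have := congrArg K.symm hKga
    rw [Homeomorph.symm_apply_apply] at this
    show (K.symm ⟨γ (cl a), hclmem a⟩ : {p : ℝ × S // p ∈ stripe (c + k)}).val = g a
    rw [← this]
  set g' : ℝ → ℝ × S := fun s => if s ≤ a then g s else m s with hg'
  have hg'c : Continuous g' := by
    apply Continuous.if_le hgc hmcont continuous_id continuous_const
    intro s hs
    simp only [id_eq] at hs
    subst hs
    exact hma.symm
  have hg'0 : g' 0 = p₀ := by
    rw [hg']; simp only [if_pos ha0]; exact hg0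
  have hg'lift : ∀ s ∈ Set.Icc (0:ℝ) b', q (g' s) = γ s := by
    intro s hs
    rw [hg']
    by_cases hcase : s ≤ a
    · simp only [if_pos hcase]
      exact hglift s ⟨hs.1, hcase⟩
    · simp only [if_neg hcase]
      push_neg at hcase
      have hclx : cl s = s := by
        rw [hcl]
        simp only
        rw [max_eq_left hcase.le, min_eq_left hs.2]
      rw [hmlift s, hclx]
  have hb'A : b' ∈ A := by
    refine ⟨le_min zero_le_one (by linarith), min_le_left _ _, g', hg'c, hg'0, hg'lift⟩
  have hb'b : b' ≤ b := le_csSup hbdd hb'A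
  have hbeq : b = 1 := by
    by_contra hne
    have hblt : b < 1 := lt_of_le_of_ne hb1 hne
    have : b < b' := lt_min hblt (by linarith)
    linarith
  have hb'1 : b' = 1 := by
    rw [hb', hbeq]
    exact min_eq_left (by linarith)
  exact ⟨g', hg'c, hg'0, by rw [← hb'1]; exact hg'lift⟩

end MTAux

attribute [local instance] Path.Homotopic.setoid
open unitInterval
open scoped FundamentalGroupoid

open scoped Manifold in
/-- `H₁` of the mapping torus of a compact connected surface with boundary is
generated by the images of `H₁` of the fiber and of `H₁` of a boundary
torus. -/
theorem mappingTorus_H1_generated_by_fiber_and_boundary_torus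
    (S : Type) [TopologicalSpace S] [ChartedSpace (EuclideanHalfSpace 2) S]
    [CompactSpace S] [ConnectedSpace S] [T2Space S]
    (φ : S ≃ₜ S)
    -- `φ` is the identity on a neighborhood of `∂Σ`:
    (V : Set S) (hVopen : IsOpen V) (hVbd : (𝓡∂ 2).boundary S ⊆ V)
    (hφV : ∀ z ∈ V, φ z = z)
    -- `C` is a connected component of the (nonempty) boundary `∂Σ`:
    (C : Set S)
    (hC : ∃ z ∈ (𝓡∂ 2).boundary S,
      C = connectedComponentIn ((𝓡∂ 2).boundary S) z)
    -- a basepoint on `C`: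
    (z₀ : S) (hz₀ : z₀ ∈ C)
    (h : Abelianization
      (FundamentalGroup (MappingTorus S ⇑φ) (MappingTorus.mk S ⇑φ 0 z₀))) :
    ∃ (a : FundamentalGroup S z₀)
      (b : FundamentalGroup (torusSet S ⇑φ C)
        ⟨MappingTorus.mk S ⇑φ 0 z₀, ⟨0, z₀, hz₀, rfl⟩⟩),
      h = (show Abelianization
              (FundamentalGroup (MappingTorus S ⇑φ) (MappingTorus.mk S ⇑φ 0 z₀))
            from Abelianization.of (inducedπ₁ (fiberIncl S ⇑φ) z₀ a))
        * (show Abelianization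
              (FundamentalGroup (MappingTorus S ⇑φ) (MappingTorus.mk S ⇑φ 0 z₀))
            from Abelianization.of (inducedπ₁ (torusIncl S ⇑φ C)
              ⟨MappingTorus.mk S ⇑φ 0 z₀, ⟨0, z₀, hz₀, rfl⟩⟩ b)) := by
    classical
  -- `φ` fixes the basepoint
  obtain ⟨zb, hzb, hCeq⟩ := hC
  have hCsub : C ⊆ V := by
    rw [hCeq]; exact (connectedComponentIn_subset _ _).trans hVbd
  have hφz₀ : φ z₀ = z₀ := hφV z₀ (hCsub hz₀)
  have hφsz₀ : φ.symm z₀ = z₀ := by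
    conv_lhs => rw [← hφz₀]
    exact φ.symm_apply_apply z₀
  have hPz₀ : ∀ n : ℤ, MTAux.P φ n z₀ = z₀ := by
    intro n
    induction n using Int.induction_on with
    | zero => rfl
    | succ k ih => rw [MTAux.P_add_one, hφz₀, ih]
    | pred k ih => rw [MTAux.P_sub_one, hφsz₀, ih]
  -- pick a representative loop for the given homology class
  obtain ⟨gelt, hgelt⟩ : ∃ g, Abelianization.of g = h := by
    obtain ⟨g, hg⟩ := Quot.exists_rep h
    exact ⟨g, hg⟩
  obtain ⟨γp, hγp⟩ := Quotient.exists_rep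
    (gelt : Path.Homotopic.Quotient (MappingTorus.mk S ⇑φ 0 z₀) (MappingTorus.mk S ⇑φ 0 z₀))
  -- lift the loop to `ℝ × S`
  obtain ⟨gL, hgLc, hgL0, hgLlift⟩ := MTAux.lift_exists φ γp.extend γp.continuous_extend
    ((0:ℝ), z₀) (by rw [Path.extend_zero])
  have hend : MappingTorus.mk S ⇑φ (gL 1).1 (gL 1).2 = MappingTorus.mk S ⇑φ 0 z₀ := by
    rw [hgLlift 1 ⟨zero_le_one, le_refl 1⟩, Path.extend_one]
  obtain ⟨n, hn1, hn2⟩ := (MTAux.mk_eq_iff φ).mp hend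
  have hn1' : (gL 1).1 = (n : ℝ) := by rw [hn1]; ring
  have hn2' : (gL 1).2 = z₀ := by rw [hn2, hPz₀]
  have hgL1 : gL 1 = ((n : ℝ), z₀) := by rw [← hn1', ← hn2']
  have hτend : MappingTorus.mk S ⇑φ (n : ℝ) z₀ = MappingTorus.mk S ⇑φ 0 z₀ := by
    have h1 := MTAux.q_zpow φ n 0 z₀
    rw [hPz₀, zero_add] at h1
    exact h1
  -- the path traced by the lift
  set pSig : Path ((0:ℝ), z₀) (((n : ℝ), z₀) : ℝ × S) :=
    { toFun := fun s => gL s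
      continuous_toFun := hgLc.comp continuous_subtype_val
      source' := by show gL ((0:I) : ℝ) = _; rw [show ((0:I) : ℝ) = (0:ℝ) from rfl, hgL0]
      target' := by show gL ((1:I) : ℝ) = _; rw [show ((1:I) : ℝ) = (1:ℝ) from rfl, hgL1] }
    with hpSig
  -- the "stable letter" path in `ℝ × S`
  set σp : Path ((0:ℝ), z₀) (((n : ℝ), z₀) : ℝ × S) :=
    { toFun := fun s => ((n : ℝ) * s, z₀)
      continuous_toFun := (continuous_const.mul continuous_subtype_val).prodMk continuous_const
      source' := by norm_num
      target' := by norm_num }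
    with hσp
  set δ : Path ((0:ℝ), z₀) (((0:ℝ), z₀) : ℝ × S) := pSig.trans σp.symm with hδ
  set aPath : Path z₀ z₀ := (δ.map continuous_snd : Path z₀ z₀) with haPath
  -- the image loops in the mapping torus
  set τ : Path (MappingTorus.mk S ⇑φ 0 z₀) (MappingTorus.mk S ⇑φ 0 z₀) :=
    { toFun := fun s => MappingTorus.mk S ⇑φ ((n : ℝ) * s) z₀
      continuous_toFun := (MTAux.continuous_mk φ).comp
        ((continuous_const.mul continuous_subtype_val).prodMk continuous_const)
      source' := by show MappingTorus.mk S ⇑φ ((n : ℝ) * ((0:I) : ℝ)) z₀ = _; norm_num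
      target' := by
        show MappingTorus.mk S ⇑φ ((n : ℝ) * ((1:I) : ℝ)) z₀ = _
        rw [show ((1:I) : ℝ) = (1:ℝ) from rfl, mul_one]
        exact hτend }
    with hτ
  set qp : Path (MappingTorus.mk S ⇑φ 0 z₀) (MappingTorus.mk S ⇑φ 0 z₀) :=
    { toFun := fun s => MappingTorus.mk S ⇑φ (gL s).1 (gL s).2
      continuous_toFun := (MTAux.continuous_mk φ).comp (hgLc.comp continuous_subtype_val)
      source' := by
        show MappingTorus.mk S ⇑φ (gL ((0:I) : ℝ)).1 (gL ((0:I) : ℝ)).2 = _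
        rw [show ((0:I) : ℝ) = (0:ℝ) from rfl, hgL0]
      target' := by
        show MappingTorus.mk S ⇑φ (gL ((1:I) : ℝ)).1 (gL ((1:I) : ℝ)).2 = _
        rw [show ((1:I) : ℝ) = (1:ℝ) from rfl]
        exact hend }
    with hqp
  have hqpγ : qp = γp := by
    apply Path.ext
    funext s
    show MappingTorus.mk S ⇑φ (gL s).1 (gL s).2 = γp s
    rw [hgLlift s ⟨s.2.1, s.2.2⟩]
    exact γp.extend_extends' s
  -- the loop in the boundary torus
  set bPath : Path (⟨MappingTorus.mk S ⇑φ 0 z₀, ⟨0, z₀, hz₀, rfl⟩⟩ : torusSet S ⇑φ C)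
      (⟨MappingTorus.mk S ⇑φ 0 z₀, ⟨0, z₀, hz₀, rfl⟩⟩ : torusSet S ⇑φ C) :=
    { toFun := fun s => ⟨MappingTorus.mk S ⇑φ ((n : ℝ) * s) z₀, ⟨(n : ℝ) * s, z₀, hz₀, rfl⟩⟩
      continuous_toFun := Continuous.subtype_mk ((MTAux.continuous_mk φ).comp
        ((continuous_const.mul continuous_subtype_val).prodMk continuous_const)) _
      source' := by
        apply Subtype.ext
        show MappingTorus.mk S ⇑φ ((n : ℝ) * ((0:I) : ℝ)) z₀ = _
        norm_num
      target' := by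
        apply Subtype.ext
        show MappingTorus.mk S ⇑φ ((n : ℝ) * ((1:I) : ℝ)) z₀ = _
        rw [show ((1:I) : ℝ) = (1:ℝ) from rfl, mul_one]
        exact hτend }
    with hbPath
  -- pointwise identification of `q ∘ δ` with `qp.trans τ.symm`
  have C1 : ∀ s : I, MappingTorus.mk S ⇑φ (δ s).1 (δ s).2 = (qp.trans τ.symm) s := by
    intro s
    rw [hδ, Path.trans_apply, Path.trans_apply]
    split_ifs with hcase
    · rfl
    · rfl
  -- the homotopy contracting the ℝ-coordinate
  have Fcont : Continuous (fun u : I × I => MappingTorus.mk S ⇑φ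
      ((1 - (u.1 : ℝ)) * (δ u.2).1) ((δ u.2).2)) := by
    show Continuous ((fun p : ℝ × S => MappingTorus.mk S ⇑φ p.1 p.2) ∘
      (fun u : I × I => (((1 : ℝ) - (u.1 : ℝ)) * (δ u.2).1, (δ u.2).2)))
    apply (MTAux.continuous_mk φ).comp
    apply Continuous.prodMk
    · exact (continuous_const.sub (continuous_subtype_val.comp continuous_fst)).mul
        (δ.continuous.comp continuous_snd).fst
    · exact (δ.continuous.comp continuous_snd).snd
  have E2 : (qp.trans τ.symm).Homotopic (aPath.map (fiberIncl S ⇑φ).continuous) := by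
    refine ⟨⟨⟨⟨fun u : I × I => MappingTorus.mk S ⇑φ
        ((1 - (u.1 : ℝ)) * (δ u.2).1) ((δ u.2).2), Fcont⟩, ?_, ?_⟩, ?_⟩⟩
    · intro s
      show MappingTorus.mk S ⇑φ ((1 - ((0:I) : ℝ)) * (δ s).1) ((δ s).2) = _
      rw [show ((1:ℝ) - ((0:I) : ℝ)) * (δ s).1 = (δ s).1 by norm_num]
      exact C1 s
    · intro s
      show MappingTorus.mk S ⇑φ ((1 - ((1:I) : ℝ)) * (δ s).1) ((δ s).2) = _
      rw [show ((1:ℝ) - ((1:I) : ℝ)) * (δ s).1 = 0 by norm_num]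
      rfl
    · intro t x hx
      simp only [Set.mem_insert_iff, Set.mem_singleton_iff] at hx
      rcases hx with rfl | rfl
      · show MappingTorus.mk S ⇑φ ((1 - (t : ℝ)) * (δ 0).1) ((δ 0).2) = _
        rw [δ.source]
        show MappingTorus.mk S ⇑φ ((1 - (t : ℝ)) * 0) z₀ = _
        rw [mul_zero]
        exact ((qp.trans τ.symm).source).symm
      · show MappingTorus.mk S ⇑φ ((1 - (t : ℝ)) * (δ 1).1) ((δ 1).2) = _
        rw [δ.target]
        show MappingTorus.mk S ⇑φ ((1 - (t : ℝ)) * 0) z₀ = _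
        rw [mul_zero]
        exact ((qp.trans τ.symm).target).symm
  -- identification of the boundary-torus loop with `τ`
  have hbm : (bPath.map (torusIncl S ⇑φ C).continuous
      : Path (MappingTorus.mk S ⇑φ 0 z₀) (MappingTorus.mk S ⇑φ 0 z₀)) = τ := by
    apply Path.ext
    rfl
  -- the group elements
  set aG : FundamentalGroup S z₀ :=
    (⟦aPath⟧ : Path.Homotopic.Quotient z₀ z₀) with haG
  set bG : FundamentalGroup (torusSet S ⇑φ C)
      ⟨MappingTorus.mk S ⇑φ 0 z₀, ⟨0, z₀, hz₀, rfl⟩⟩ :=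
    (⟦bPath⟧ : Path.Homotopic.Quotient _ _) with hbG
  -- the main identity in the fundamental group
  have hAut : gelt = (show FundamentalGroup (MappingTorus S ⇑φ) (MappingTorus.mk S ⇑φ 0 z₀)
        from inducedπ₁ (torusIncl S ⇑φ C) ⟨MappingTorus.mk S ⇑φ 0 z₀, ⟨0, z₀, hz₀, rfl⟩⟩ bG)
      * (show FundamentalGroup (MappingTorus S ⇑φ) (MappingTorus.mk S ⇑φ 0 z₀)
        from inducedπ₁ (fiberIncl S ⇑φ) z₀ aG) := by
    show gelt = (inducedπ₁ (fiberIncl S ⇑φ) z₀ aG)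
          ≫ (inducedπ₁ (torusIncl S ⇑φ C)
              ⟨MappingTorus.mk S ⇑φ 0 z₀, ⟨0, z₀, hz₀, rfl⟩⟩ bG)
    have hιhom : (inducedπ₁ (fiberIncl S ⇑φ) z₀ aG)
        = (⟦aPath.map (fiberIncl S ⇑φ).continuous⟧
            : Path.Homotopic.Quotient (MappingTorus.mk S ⇑φ 0 z₀) (MappingTorus.mk S ⇑φ 0 z₀)) := by
      show (πₘ (show TopCat.of S ⟶ TopCat.of (MappingTorus S ⇑φ) from TopCat.ofHom (fiberIncl S ⇑φ))).map
          (⟦aPath⟧ : Path.Homotopic.Quotient z₀ z₀) = _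
      rfl
    have hjhom : (inducedπ₁ (torusIncl S ⇑φ C)
          ⟨MappingTorus.mk S ⇑φ 0 z₀, ⟨0, z₀, hz₀, rfl⟩⟩ bG)
        = (⟦bPath.map (torusIncl S ⇑φ C).continuous⟧
            : Path.Homotopic.Quotient (MappingTorus.mk S ⇑φ 0 z₀) (MappingTorus.mk S ⇑φ 0 z₀)) := by
      show (πₘ (show TopCat.of (torusSet S ⇑φ C) ⟶ TopCat.of (MappingTorus S ⇑φ)
          from TopCat.ofHom (torusIncl S ⇑φ C))).map (⟦bPath⟧ : Path.Homotopic.Quotient _ _) = _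
      rfl
    have ham : (⟦aPath.map (fiberIncl S ⇑φ).continuous⟧
        : Path.Homotopic.Quotient (MappingTorus.mk S ⇑φ 0 z₀) (MappingTorus.mk S ⇑φ 0 z₀))
        = ⟦qp.trans τ.symm⟧ := (Quotient.sound E2).symm
    rw [hιhom, hjhom, ← hγp, hbm, ham]
    show (⟦γp⟧ : Path.Homotopic.Quotient (MappingTorus.mk S ⇑φ 0 z₀) (MappingTorus.mk S ⇑φ 0 z₀))
        = (⟦(qp.trans τ.symm).trans τ⟧ : Path.Homotopic.Quotient _ _)
    rw [← hqpγ]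
    apply Quotient.sound
    apply Path.Homotopic.symm
    have s1 : ((qp.trans τ.symm).trans τ).Homotopic (qp.trans (τ.symm.trans τ)) :=
      ⟨Path.Homotopy.transAssoc qp τ.symm τ⟩
    have s2 : (τ.symm.trans τ).Homotopic (Path.refl (MappingTorus.mk S ⇑φ 0 z₀)) :=
      ⟨(Path.Homotopy.reflSymmTrans τ).symm⟩
    have s3 : (qp.trans (τ.symm.trans τ)).Homotopic
        (qp.trans (Path.refl (MappingTorus.mk S ⇑φ 0 z₀))) :=
      Path.Homotopic.hcomp (Path.Homotopic.refl qp) s2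
    have s4 : (qp.trans (Path.refl (MappingTorus.mk S ⇑φ 0 z₀))).Homotopic qp :=
      ⟨Path.Homotopy.transRefl qp⟩
    exact (s1.trans s3).trans s4
  refine ⟨aG, bG, ?_⟩
  calc h = Abelianization.of gelt := hgelt.symm
    _ = Abelianization.of ((show FundamentalGroup (MappingTorus S ⇑φ) (MappingTorus.mk S ⇑φ 0 z₀)
        from inducedπ₁ (torusIncl S ⇑φ C) ⟨MappingTorus.mk S ⇑φ 0 z₀, ⟨0, z₀, hz₀, rfl⟩⟩ bG)
      * (show FundamentalGroup (MappingTorus S ⇑φ) (MappingTorus.mk S ⇑φ 0 z₀)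
        from inducedπ₁ (fiberIncl S ⇑φ) z₀ aG)) := by rw [← hAut]
    _ = Abelianization.of (show FundamentalGroup (MappingTorus S ⇑φ) (MappingTorus.mk S ⇑φ 0 z₀)
        from inducedπ₁ (torusIncl S ⇑φ C) ⟨MappingTorus.mk S ⇑φ 0 z₀, ⟨0, z₀, hz₀, rfl⟩⟩ bG)
        * Abelianization.of (show FundamentalGroup (MappingTorus S ⇑φ) (MappingTorus.mk S ⇑φ 0 z₀)
        from inducedπ₁ (fiberIncl S ⇑φ) z₀ aG) := map_mul _ _ _
    _ = _ := mul_comm _ _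
end
end
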